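/- Let T be a rank one bounded operator on a complex Hilbert space H with tr T = 0. Then the following are equivalent: (i) the semigroup S(T, T*) generated by T and T* is a selfadjoint-ideal (SI) semigroup; (ii) ‖T‖ = 1; (iii) S(T, T*) is a simple semigroup. -/

import Mathlib

open ContinuousLinearMap
open scoped ComplexInnerProductSpace

variable {H : Type*} [NormedAddCommGroup H] [InnerProductSpace ℂ H] [CompleteSpace H]

/-- `J` is a (two-sided) semigroup-ideal of `S`. -/
def IsSemigroupIdeal {M : Type*} [Mul M] (S J : Set M) : Prop :=
  J ⊆ S ∧ ∀ T ∈ J, ∀ X ∈ S, X * T ∈ J ∧ T * X ∈ J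

/-- `S` is a selfadjoint-ideal (SI) semigroup: every semigroup-ideal of `S`
is closed under adjoints. -/
def IsSI (S : Set (H →L[ℂ] H)) : Prop :=
  ∀ J : Set (H →L[ℂ] H), IsSemigroupIdeal S J → ∀ T ∈ J, adjoint T ∈ J

/-- `S` is simple: every ideal of `S` containing a nonzero element equals `S`. -/
def IsSimpleSemigroup {M : Type*} [Mul M] [Zero M] (S : Set M) : Prop :=
  ∀ J : Set M, IsSemigroupIdeal S J → (∃ T ∈ J, T ≠ 0) → J = S

/-- `S(T, T*)`: the semigroup generated by `T` and `T*`, i.e. all finite products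
`A₁ ⋯ A_k` (`k ≥ 1`) with each `Aᵢ ∈ {T, T*}`. -/
noncomputable def genSG (T : H →L[ℂ] H) : Set (H →L[ℂ] H) :=
  (Subsemigroup.closure {T, adjoint T} : Subsemigroup (H →L[ℂ] H))

set_option maxHeartbeats 4000000 in
/-- for `T` rank one (its range is spanned by a unit vector `f`) with
`tr T = ⟨T f, f⟩ = 0`, TFAE: (i) `S(T, T*)` is SI; (ii) `‖T‖ = 1`;
(iii) `S(T, T*)` is simple.  (Note Mathlib's inner product is conjugate-linear in
the first slot, so the paper's `⟨T f, f⟩` is `⟪f, T f⟫`.) -/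
theorem stmt9 (T : H →L[ℂ] H) (f : H) (hf : ‖f‖ = 1)
    (hrange : LinearMap.range (T : H →ₗ[ℂ] H) = Submodule.span ℂ {f})
    (htr : ⟪f, T f⟫ = 0) :
    List.TFAE [IsSI (genSG T), ‖T‖ = 1, IsSimpleSemigroup (genSG T)] := by
  obtain ⟨g, hg⟩ : ∃ g, adjoint T f = g := ⟨_, rfl⟩
  have hf0 : f ≠ 0 := by
    intro h; rw [h, norm_zero] at hf; exact one_ne_zero hf.symm
  have hff : ⟪f, f⟫ = 1 := by
    rw [inner_self_eq_norm_sq_to_K, hf]; norm_num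
  have hgf : ⟪g, f⟫ = 0 := by
    rw [← hg, adjoint_inner_left]; exact htr
  have hfg : ⟪f, g⟫ = 0 := by
    rw [← inner_conj_symm, hgf, map_zero]
  -- pointwise formula for T
  have hTx : ∀ x, T x = ⟪g, x⟫ • f := by
    intro x
    have h1 : T x ∈ Submodule.span ℂ {f} := by
      rw [← hrange]; exact LinearMap.mem_range_self (T : H →ₗ[ℂ] H) x
    obtain ⟨a, ha⟩ := Submodule.mem_span_singleton.mp h1
    have h2 : ⟪f, T x⟫ = a := by rw [← ha, inner_smul_right, hff, mul_one]
    have h3 : ⟪g, x⟫ = a := by rw [← hg, adjoint_inner_left]; exact h2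
    rw [← ha, h3]
  have hg0 : g ≠ 0 := by
    intro h
    have hfr : f ∈ Submodule.span ℂ {f} := Submodule.mem_span_singleton_self f
    rw [← hrange] at hfr
    obtain ⟨x, hx⟩ := hfr
    apply hf0
    rw [← hx, coe_coe, hTx, h, inner_zero_left, zero_smul]
  -- pointwise formula for adjoint T
  have hT'x : ∀ x, adjoint T x = ⟪f, x⟫ • g := by
    intro x
    apply ext_inner_right ℂ
    intro v
    rw [adjoint_inner_left, hTx, inner_smul_right, inner_smul_left, inner_conj_symm]
    ring
  set k : ℂ := ⟪g, g⟫ with hk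
  have hk0 : k ≠ 0 := fun h => hg0 (inner_self_eq_zero.mp h)
  have hknorm : k = (‖g‖ : ℂ) ^ 2 := inner_self_eq_norm_sq_to_K g
  -- evaluations at f
  have hTf : T f = 0 := by rw [hTx, hgf, zero_smul]
  have hT'f : adjoint T f = g := hg
  -- basic operator identities
  have hb1 : T * T = 0 := by
    ext x; simp [mul_apply, hTx, inner_smul_right, hgf]
  have hb2 : adjoint T * adjoint T = 0 := by
    ext x; simp [mul_apply, hT'x, inner_smul_right, hfg]
  have hb5 : (T * adjoint T) * T = k • T := by
    ext x
    simp only [mul_apply_eq_comp, smul_apply, hTx, hT'x, inner_smul_right, hff, hfg, hgf, smul_smul, hk]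
    ring_nf
  have hb6 : (adjoint T * T) * adjoint T = k • adjoint T := by
    ext x
    simp only [mul_apply_eq_comp, smul_apply, hTx, hT'x, inner_smul_right, hff, hfg, hgf, smul_smul, hk]
    ring_nf
  -- derived identities
  have hb7 : (T * adjoint T) * (T * adjoint T) = k • (T * adjoint T) := by
    rw [← mul_assoc, hb5, smul_mul_assoc]
  have hb8 : (adjoint T * T) * (adjoint T * T) = k • (adjoint T * T) := by
    rw [← mul_assoc, hb6, smul_mul_assoc]
  have hb9 : (T * adjoint T) * (adjoint T * T) = 0 := by
    rw [← mul_assoc, mul_assoc T (adjoint T) (adjoint T), hb2, mul_zero, zero_mul]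
  have hb10 : (adjoint T * T) * (T * adjoint T) = 0 := by
    rw [← mul_assoc, mul_assoc (adjoint T) T T, hb1, mul_zero, zero_mul]
  have hb11 : T * (T * adjoint T) = 0 := by rw [← mul_assoc, hb1, zero_mul]
  have hb12 : T * (adjoint T * T) = k • T := by rw [← mul_assoc, hb5]
  have hb13 : adjoint T * (T * adjoint T) = k • adjoint T := by rw [← mul_assoc, hb6]
  have hb14 : adjoint T * (adjoint T * T) = 0 := by rw [← mul_assoc, hb2, zero_mul]
  have hb15 : (T * adjoint T) * adjoint T = 0 := by rw [mul_assoc, hb2, mul_zero]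
  have hb16 : (adjoint T * T) * T = 0 := by rw [mul_assoc, hb1, mul_zero]
  -- scalar manipulation helpers
  have e0 : ∀ (a b : ℂ) (A B : H →L[ℂ] H), A * B = 0 → (a • A) * (b • B) = 0 := by
    intro a b A B h
    rw [smul_mul_assoc, mul_smul_comm, h, smul_zero, smul_zero]
  have eC : ∀ (m n : ℕ) (A B C : H →L[ℂ] H), A * B = C →
      (k ^ m • A) * (k ^ n • B) = k ^ (m + n) • C := by
    intro m n A B C h
    rw [smul_mul_assoc, mul_smul_comm, h, smul_smul, ← pow_add]
  have eK : ∀ (m n : ℕ) (A B C : H →L[ℂ] H), A * B = k • C →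
      (k ^ m • A) * (k ^ n • B) = k ^ (m + n + 1) • C := by
    intro m n A B C h
    rw [smul_mul_assoc, mul_smul_comm, h, smul_smul, smul_smul, ← pow_add, ← pow_succ]
  -- membership helpers in genSG
  have hTS : T ∈ genSG T := Subsemigroup.subset_closure (Set.mem_insert _ _)
  have hT'S : adjoint T ∈ genSG T :=
    Subsemigroup.subset_closure (Set.mem_insert_of_mem _ rfl)
  have hSmul : ∀ {X Y : H →L[ℂ] H}, X ∈ genSG T → Y ∈ genSG T → X * Y ∈ genSG T := by
    intro X Y hX hY
    exact mul_mem hX hY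
  -- description of the semigroup
  set D : Set (H →L[ℂ] H) := {X | X = 0 ∨ ∃ m : ℕ, X = k ^ m • T ∨ X = k ^ m • adjoint T ∨
    X = k ^ m • (T * adjoint T) ∨ X = k ^ m • (adjoint T * T)} with hD
  -- products of two elements of D
  have hmulD : ∀ X ∈ D, ∀ Y ∈ D, X * Y = 0 ∨ ∃ m : ℕ,
      X * Y = k ^ (m + 1) • T ∨ X * Y = k ^ (m + 1) • adjoint T ∨
      X * Y = k ^ m • (T * adjoint T) ∨ X * Y = k ^ m • (adjoint T * T) := by
    rintro X (rfl | ⟨m, rfl | rfl | rfl | rfl⟩) Y hY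
    · left; rw [zero_mul]
    all_goals rcases hY with (rfl | ⟨n, rfl | rfl | rfl | rfl⟩)
    -- X = k^m • T
    · left; rw [mul_zero]
    · left; exact e0 _ _ _ _ hb1
    · exact Or.inr ⟨m + n, Or.inr (Or.inr (Or.inl (eC m n _ _ _ rfl)))⟩
    · left; exact e0 _ _ _ _ hb11
    · exact Or.inr ⟨m + n, Or.inl (eK m n _ _ _ hb12)⟩
    -- X = k^m • adjoint T
    · left; rw [mul_zero]
    · exact Or.inr ⟨m + n, Or.inr (Or.inr (Or.inr (eC m n _ _ _ rfl)))⟩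
    · left; exact e0 _ _ _ _ hb2
    · exact Or.inr ⟨m + n, Or.inr (Or.inl (eK m n _ _ _ hb13))⟩
    · left; exact e0 _ _ _ _ hb14
    -- X = k^m • (T * adjoint T)
    · left; rw [mul_zero]
    · exact Or.inr ⟨m + n, Or.inl (eK m n _ _ _ hb5)⟩
    · left; exact e0 _ _ _ _ hb15
    · exact Or.inr ⟨m + n + 1, Or.inr (Or.inr (Or.inl (eK m n _ _ _ hb7)))⟩
    · left; exact e0 _ _ _ _ hb9
    -- X = k^m • (adjoint T * T)
    · left; rw [mul_zero]
    · left; exact e0 _ _ _ _ hb16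
    · exact Or.inr ⟨m + n, Or.inr (Or.inl (eK m n _ _ _ hb6))⟩
    · left; exact e0 _ _ _ _ hb10
    · exact Or.inr ⟨m + n + 1, Or.inr (Or.inr (Or.inr (eK m n _ _ _ hb8)))⟩
  have hD2D : ∀ X : H →L[ℂ] H, (X = 0 ∨ ∃ m : ℕ,
      X = k ^ (m + 1) • T ∨ X = k ^ (m + 1) • adjoint T ∨
      X = k ^ m • (T * adjoint T) ∨ X = k ^ m • (adjoint T * T)) → X ∈ D := by
    rintro X (rfl | ⟨m, h | h | h | h⟩)
    · exact Or.inl rfl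
    · exact Or.inr ⟨m + 1, Or.inl h⟩
    · exact Or.inr ⟨m + 1, Or.inr (Or.inl h)⟩
    · exact Or.inr ⟨m, Or.inr (Or.inr (Or.inl h))⟩
    · exact Or.inr ⟨m, Or.inr (Or.inr (Or.inr h))⟩
  -- D is a subsemigroup containing T and adjoint T, so genSG T ⊆ D
  have hSD : genSG T ⊆ D := by
    have hDsub : Subsemigroup.closure {T, adjoint T} ≤
        ⟨D, fun {a b} ha hb => hD2D _ (hmulD a ha b hb)⟩ := by
      rw [Subsemigroup.closure_le]
      rintro X (rfl | rfl)
      · exact Or.inr ⟨0, Or.inl (by rw [pow_zero, one_smul])⟩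
      · exact Or.inr ⟨0, Or.inr (Or.inl (by rw [pow_zero, one_smul]))⟩
    exact fun X hX => hDsub hX
  -- norm of T
  have hnorm : ‖T‖ = ‖g‖ := by
    apply le_antisymm
    · apply opNorm_le_bound _ (norm_nonneg g)
      intro x
      rw [hTx, norm_smul, hf, mul_one]
      exact norm_inner_le_norm g x
    · have h1 : ‖T g‖ ≤ ‖T‖ * ‖g‖ := le_opNorm T g
      have h2 : ‖T g‖ = ‖g‖ ^ 2 := by
        rw [hTx, norm_smul, hf, mul_one, ← hk, hknorm]
        simp [abs_of_nonneg (norm_nonneg g)]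
      rw [h2, sq] at h1
      have hgpos : 0 < ‖g‖ := norm_pos_iff.mpr hg0
      exact le_of_mul_le_mul_right (by linarith) hgpos
  have hT0 : T ≠ 0 := by
    intro h
    apply hg0
    rw [← hg, h, map_zero, zero_apply]
  have hTneT' : T ≠ adjoint T := by
    intro h
    apply hg0
    rw [← hT'f, ← h, hTf]
  -- the bad ideal when ‖T‖ ≠ 1
  have hbad : ‖T‖ ≠ 1 →
      IsSemigroupIdeal (genSG T) (genSG T \ {adjoint T}) ∧ T ∈ genSG T \ {adjoint T} := by
    intro hn1
    have hgn1 : ‖g‖ ≠ 1 := by rw [← hnorm]; exact hn1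
    -- no product of two elements of D equals adjoint T
    have hkey : ∀ X ∈ D, ∀ Y ∈ D, X * Y ≠ adjoint T := by
      intro X hX Y hY hEq
      rcases hmulD X hX Y hY with h | ⟨m, h | h | h | h⟩
      · rw [hEq] at h
        apply hg0
        rw [← hT'f, h, zero_apply]
      · rw [hEq] at h
        have h1 : adjoint T f = (k ^ (m + 1) • T) f := by rw [← h]
        rw [hT'f, smul_apply, hTf, smul_zero] at h1
        exact hg0 h1
      · rw [hEq] at h
        have h1 : adjoint T f = (k ^ (m + 1) • adjoint T) f := by rw [← h]
        rw [hT'f, smul_apply, hT'f] at h1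
        -- g = k^(m+1) • g, so k^(m+1) = 1
        have h3 : (k ^ (m + 1) - 1) • g = 0 := by
          rw [sub_smul, one_smul, ← h1, sub_self]
        have h4 : k ^ (m + 1) = 1 := by
          rcases smul_eq_zero.mp h3 with h4 | h4
          · exact sub_eq_zero.mp h4
          · exact absurd h4 hg0
        rw [hknorm, ← pow_mul, ← Complex.ofReal_pow, Complex.ofReal_eq_one] at h4
        apply hgn1
        rcases lt_trichotomy (‖g‖) 1 with hlt | heq | hgt
        · have := pow_lt_one₀ (norm_nonneg g) hlt (n := 2 * (m + 1)) (by omega)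
          linarith
        · exact heq
        · have := one_lt_pow₀ hgt (n := 2 * (m + 1)) (by omega)
          linarith
      · rw [hEq] at h
        have hval : (T * adjoint T) f = k • f := by
          rw [mul_apply_eq_comp, hT'f, hTx, ← hk]
        have h1 : adjoint T f = (k ^ m • (T * adjoint T)) f := by rw [← h]
        rw [hT'f, smul_apply, hval, smul_smul] at h1
        have h2 : (0 : ℂ) = k ^ m * k := by
          calc (0 : ℂ) = ⟪f, g⟫ := hfg.symm
            _ = k ^ m * k := by rw [h1, inner_smul_right, hff, mul_one]
        exact (mul_ne_zero (pow_ne_zero m hk0) hk0) h2.symm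
      · rw [hEq] at h
        have h1 : adjoint T f = (k ^ m • (adjoint T * T)) f := by rw [← h]
        rw [hT'f, smul_apply, mul_apply_eq_comp, hTf, map_zero, smul_zero] at h1
        exact hg0 h1
    constructor
    · constructor
      · exact Set.diff_subset
      · intro A hA X hX
        constructor
        · exact ⟨hSmul hX hA.1, hkey X (hSD hX) A (hSD hA.1)⟩
        · exact ⟨hSmul hA.1 hX, hkey A (hSD hA.1) X (hSD hX)⟩
    · exact ⟨hTS, hTneT'⟩
  tfae_have 1 → 2 := by
    intro h1
    by_contra h2
    obtain ⟨hIdeal, hTJ⟩ := hbad h2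
    have := h1 _ hIdeal T hTJ
    exact this.2 rfl
  tfae_have 3 → 2 := by
    intro h3
    by_contra h2
    obtain ⟨hIdeal, hTJ⟩ := hbad h2
    have hJeq := h3 _ hIdeal ⟨T, hTJ, hT0⟩
    have : adjoint T ∈ genSG T \ {adjoint T} := by rw [hJeq]; exact hT'S
    exact this.2 rfl
  -- now the ‖T‖ = 1 cases
  tfae_have 2 → 1 := by
    intro h2
    have hk1 : k = 1 := by
      rw [hknorm, ← hnorm, h2]; norm_num
    have hcases : ∀ X ∈ genSG T, X = 0 ∨ X = T ∨ X = adjoint T ∨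
        X = T * adjoint T ∨ X = adjoint T * T := by
      intro X hX
      rcases hSD hX with h | ⟨m, h | h | h | h⟩
      · exact Or.inl h
      all_goals rw [hk1, one_pow, one_smul] at h
      all_goals tauto
    have hb5' : T * adjoint T * T = T := by rw [hb5, hk1, one_smul]
    have hb6' : adjoint T * T * adjoint T = adjoint T := by rw [hb6, hk1, one_smul]
    rintro J ⟨hJS, hJmul⟩ A hA
    rcases hcases A (hJS hA) with h | h | h | h | h
    all_goals rw [h] at hA ⊢
    · rw [map_zero]; exact hA
    · -- A = T : need adjoint T ∈ J
      have s1 : T * adjoint T ∈ J := (hJmul T hA (adjoint T) hT'S).2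
      have s2 : adjoint T * (T * adjoint T) ∈ J := (hJmul _ s1 (adjoint T) hT'S).1
      rwa [← mul_assoc, hb6'] at s2
    · -- A = adjoint T : need T ∈ J
      rw [adjoint_adjoint]
      have s1 : adjoint T * T ∈ J := (hJmul (adjoint T) hA T hTS).2
      have s2 : T * (adjoint T * T) ∈ J := (hJmul _ s1 T hTS).1
      rwa [← mul_assoc, hb5'] at s2
    · rw [mul_def, adjoint_comp, adjoint_adjoint, ← mul_def]
      exact hA
    · rw [mul_def, adjoint_comp, adjoint_adjoint, ← mul_def]
      exact hA
  tfae_have 2 → 3 := by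
    intro h2
    have hk1 : k = 1 := by
      rw [hknorm, ← hnorm, h2]; norm_num
    have hcases : ∀ X ∈ genSG T, X = 0 ∨ X = T ∨ X = adjoint T ∨
        X = T * adjoint T ∨ X = adjoint T * T := by
      intro X hX
      rcases hSD hX with h | ⟨m, h | h | h | h⟩
      · exact Or.inl h
      all_goals rw [hk1, one_pow, one_smul] at h
      all_goals tauto
    have hb5' : T * adjoint T * T = T := by rw [hb5, hk1, one_smul]
    have hb6' : adjoint T * T * adjoint T = adjoint T := by rw [hb6, hk1, one_smul]
    rintro J ⟨hJS, hJmul⟩ ⟨A, hA, hA0⟩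
    -- first, get T ∈ J
    have hTJ : T ∈ J := by
      rcases hcases A (hJS hA) with h | h | h | h | h
      all_goals rw [h] at hA hA0
      · exact absurd rfl hA0
      · exact hA
      · -- A = adjoint T
        have s1 : adjoint T * T ∈ J := (hJmul _ hA T hTS).2
        have s2 : T * (adjoint T * T) ∈ J := (hJmul _ s1 T hTS).1
        rwa [← mul_assoc, hb5'] at s2
      · -- A = T * adjoint T
        have s1 : T * adjoint T * T ∈ J := (hJmul _ hA T hTS).2
        rwa [hb5'] at s1
      · -- A = adjoint T * T
        have s1 : T * (adjoint T * T) ∈ J := (hJmul _ hA T hTS).1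
        rwa [← mul_assoc, hb5'] at s1
    -- from T ∈ J, all five elements are in J
    have hTT'J : T * adjoint T ∈ J := (hJmul T hTJ (adjoint T) hT'S).2
    have hT'TJ : adjoint T * T ∈ J := (hJmul T hTJ (adjoint T) hT'S).1
    have hT'J : adjoint T ∈ J := by
      have s2 : adjoint T * (T * adjoint T) ∈ J := (hJmul _ hTT'J (adjoint T) hT'S).1
      rwa [← mul_assoc, hb6'] at s2
    have h0J : (0 : H →L[ℂ] H) ∈ J := by
      have s1 : T * T ∈ J := (hJmul T hTJ T hTS).2
      rwa [hb1] at s1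
    apply Set.Subset.antisymm hJS
    intro X hX
    rcases hcases X hX with h | h | h | h | h
    all_goals rw [h]
    · exact h0J
    · exact hTJ
    · exact hT'J
    · exact hTT'J
    · exact hT'TJ
  tfae_finish
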